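/- Let G = (V, E) be a finite simple graph and let x̂ be an LP-optimal point of the vertex-cover LP of G. Then there exists a minimum-cardinality vertex cover C of G that agrees with x̂ on all integer coordinates: for every v ∈ V with x̂_v = 1 we have v ∈ C, and for every v ∈ V with x̂_v = 0 we have v ∉ C. (Nemhauser–Trotter persistency, Fact 3.) -/

import Mathlib

def LPFeasible {V : Type*} [Fintype V] (G : SimpleGraph V) (x : V → ℝ) : Prop :=
  (∀ v, 0 ≤ x v ∧ x v ≤ 1) ∧ ∀ u v, G.Adj u v → 1 ≤ x u + x v

noncomputable def LPValue {V : Type*} [Fintype V] (x : V → ℝ) : ℝ := ∑ v, x v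

def LPOptimal {V : Type*} [Fintype V] (G : SimpleGraph V) (x : V → ℝ) : Prop :=
  LPFeasible G x ∧ ∀ y : V → ℝ, LPFeasible G y → LPValue x ≤ LPValue y

def HalfIntegral {V : Type*} (x : V → ℝ) : Prop :=
  ∀ v, x v = 0 ∨ x v = 1/2 ∨ x v = 1

def IsVertexCover {V : Type*} [Fintype V] (G : SimpleGraph V) (C : Finset V) : Prop :=
  ∀ u v, G.Adj u v → u ∈ C ∨ v ∈ C

/-- Nemhauser–Trotter persistency: there is a minimum vertex cover agreeing with the
integer coordinates of any LP-optimal point. -/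
theorem nt_persistency {V : Type*} [Fintype V] (G : SimpleGraph V) (xhat : V → ℝ)
    (hx : LPOptimal G xhat) :
    ∃ C : Finset V, IsVertexCover G C ∧
      (∀ D : Finset V, IsVertexCover G D → C.card ≤ D.card) ∧
      (∀ v, xhat v = 1 → v ∈ C) ∧ (∀ v, xhat v = 0 → v ∉ C) := by
  classical
  obtain ⟨⟨hbd, hedge⟩, hopt⟩ := hx
  have hne : (Finset.univ.filter (fun D : Finset V => IsVertexCover G D)).Nonempty :=
    ⟨Finset.univ, Finset.mem_filter.mpr ⟨Finset.mem_univ _, fun u _ _ => Or.inl (Finset.mem_univ u)⟩⟩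
  obtain ⟨D, hDmem, hDmin⟩ := Finset.exists_min_image _ Finset.card hne
  have hDcov : IsVertexCover G D := (Finset.mem_filter.mp hDmem).2
  set V0 : Finset V := Finset.univ.filter (fun v => xhat v = 0) with hV0
  set V1 : Finset V := Finset.univ.filter (fun v => xhat v = 1) with hV1
  set A : Finset V := V1 \ D with hA
  set B : Finset V := D ∩ V0 with hB
  have hmemA : ∀ v, v ∈ A ↔ xhat v = 1 ∧ v ∉ D := by
    intro v; simp [hA, hV1, and_comm]
  have hmemB : ∀ v, v ∈ B ↔ v ∈ D ∧ xhat v = 0 := by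
    intro v; simp [hB, hV0]
  have hAB : ∀ v, v ∈ A → v ∉ B := by
    intro v hvA hvB
    have h1 := ((hmemA v).mp hvA).1
    have h2 := ((hmemB v).mp hvB).2
    rw [h1] at h2; norm_num at h2
  have key : A.card ≤ B.card := by
    by_contra hlt
    push_neg at hlt
    have hAne : A.Nonempty := Finset.card_pos.mp (lt_of_le_of_lt (Nat.zero_le _) hlt)
    obtain ⟨a, ha⟩ := hAne
    have ha1 : xhat a = 1 := ((hmemA a).mp ha).1
    set P : Finset V := Finset.univ.filter (fun v => 0 < xhat v) with hP
    have haP : a ∈ P := by simp [hP, ha1]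
    have hPne : (P.image xhat).Nonempty := ⟨xhat a, Finset.mem_image_of_mem _ haP⟩
    set ε : ℝ := (P.image xhat).min' hPne with hε
    have hεmem := (P.image xhat).min'_mem hPne
    obtain ⟨p, hp, hpε⟩ := Finset.mem_image.mp hεmem
    have hεpos : 0 < ε := by
      have := (Finset.mem_filter.mp hp).2
      rw [hpε] at this; exact this
    have hεle : ∀ v, 0 < xhat v → ε ≤ xhat v := fun v hv =>
      Finset.min'_le _ _ (Finset.mem_image_of_mem _ (by simp [hP, hv]))
    have hε1 : ε ≤ 1 := by
      have := hεle a (by rw [ha1]; norm_num)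
      linarith [this.trans_eq ha1]
    set y : V → ℝ := fun v => xhat v - (if v ∈ A then ε else 0) + (if v ∈ B then ε else 0)
      with hy
    have hyA : ∀ v ∈ A, y v = xhat v - ε := by
      intro v hv
      simp [hy, if_pos hv, hAB v hv]
    have hylow : ∀ v, v ∉ A → xhat v ≤ y v := by
      intro v hv
      simp only [hy, if_neg hv, sub_zero]
      split <;> linarith
    have hyfeas : LPFeasible G y := by
      constructor
      · intro v
        by_cases hvA : v ∈ A
        · have h1 := ((hmemA v).mp hvA).1
          rw [hyA v hvA, h1]
          constructor <;> linarith
        · by_cases hvB : v ∈ B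
          · have h0 := ((hmemB v).mp hvB).2
            simp only [hy, if_neg hvA, if_pos hvB, h0]
            constructor <;> linarith
          · simp only [hy, if_neg hvA, if_neg hvB, sub_zero, add_zero]
            exact hbd v
      · intro u v huv
        have hone : ∀ w z, G.Adj w z → w ∈ A → 1 ≤ y w + y z := by
          intro w z hwz hwA
          have hw1 := ((hmemA w).mp hwA).1
          have hwD := ((hmemA w).mp hwA).2
          have hzD : z ∈ D := (hDcov w z hwz).resolve_left hwD
          have hzA : z ∉ A := fun h => ((hmemA z).mp h).2 hzD
          rw [hyA w hwA, hw1]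
          by_cases hz0 : xhat z = 0
          · have hzB : z ∈ B := (hmemB z).mpr ⟨hzD, hz0⟩
            simp only [hy, if_neg hzA, if_pos hzB, hz0]
            linarith
          · have hzpos : 0 < xhat z := lt_of_le_of_ne (hbd z).1 (Ne.symm hz0)
            have h1 := hεle z hzpos
            have h2 := hylow z hzA
            linarith
        by_cases huA : u ∈ A
        · exact hone u v huv huA
        · by_cases hvA : v ∈ A
          · have := hone v u huv.symm hvA; linarith
          · have := hedge u v huv
            have hu := hylow u huA
            have hv := hylow v hvA
            linarith
    have hsA : ∑ v, (if v ∈ A then ε else 0) = A.card * ε := by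
      rw [Finset.sum_ite_mem, Finset.univ_inter, Finset.sum_const, nsmul_eq_mul]
    have hsB : ∑ v, (if v ∈ B then ε else 0) = B.card * ε := by
      rw [Finset.sum_ite_mem, Finset.univ_inter, Finset.sum_const, nsmul_eq_mul]
    have hval : LPValue y = LPValue xhat - A.card * ε + B.card * ε := by
      simp only [LPValue, hy]
      rw [Finset.sum_add_distrib, Finset.sum_sub_distrib, hsA, hsB]
    have hcon := hopt y hyfeas
    rw [hval] at hcon
    have hcast : (B.card : ℝ) < A.card := by exact_mod_cast hlt
    nlinarith
  refine ⟨(D \ V0) ∪ V1, ?_, ?_, ?_, ?_⟩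
  · intro u v huv
    by_cases hu1 : xhat u = 1
    · exact Or.inl (Finset.mem_union_right _ (by simp [hV1, hu1]))
    · by_cases hv1 : xhat v = 1
      · exact Or.inr (Finset.mem_union_right _ (by simp [hV1, hv1]))
      · rcases hDcov u v huv with hu | hv
        · by_cases hu0 : xhat u = 0
          · exfalso
            have h1 := hedge u v huv
            have h2 := (hbd v).2
            exact hv1 (by rw [hu0] at h1; linarith)
          · exact Or.inl (Finset.mem_union_left _
              (Finset.mem_sdiff.mpr ⟨hu, by simp [hV0, hu0]⟩))
        · by_cases hv0 : xhat v = 0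
          · exfalso
            have h1 := hedge u v huv
            have h2 := (hbd u).2
            exact hu1 (by rw [hv0] at h1; linarith)
          · exact Or.inr (Finset.mem_union_left _
              (Finset.mem_sdiff.mpr ⟨hv, by simp [hV0, hv0]⟩))
  · intro E hE
    have hDE : D.card ≤ E.card :=
      hDmin E (Finset.mem_filter.mpr ⟨Finset.mem_univ _, hE⟩)
    have hCeq : (D \ V0) ∪ V1 = (D \ V0) ∪ A := by
      ext v
      simp only [Finset.mem_union, hA, Finset.mem_sdiff, hV1, hV0, Finset.mem_filter,
        Finset.mem_univ, true_and]
      constructor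
      · rintro (h | h)
        · exact Or.inl h
        · by_cases hvD : v ∈ D
          · exact Or.inl ⟨hvD, by rw [h]; norm_num⟩
          · exact Or.inr ⟨h, hvD⟩
      · rintro (h | h)
        · exact Or.inl h
        · exact Or.inr h.1
    have hdisj : Disjoint (D \ V0) A :=
      Finset.disjoint_left.mpr fun x hx hxA =>
        ((hmemA x).mp hxA).2 (Finset.mem_sdiff.mp hx).1
    rw [hCeq, Finset.card_union_of_disjoint hdisj]
    have h1 : (D ∩ V0).card + (D \ V0).card = D.card := Finset.card_inter_add_card_sdiff D V0
    rw [← hB] at h1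
    omega
  · intro v hv
    exact Finset.mem_union_right _ (by simp [hV1, hv])
  · intro v hv hmem
    rcases Finset.mem_union.mp hmem with h | h
    · exact (Finset.mem_sdiff.mp h).2 (by simp [hV0, hv])
    · have h1 : xhat v = 1 := by simpa [hV1] using h
      rw [hv] at h1; norm_num at h1
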